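/- Let Ω be a Polish space and let 𝒫 be a nonempty set of Borel probability measures on Ω that is compact in the topology of weak convergence of measures. Let X, Y : Ω → ℝ be Borel measurable functions, integrable with respect to every P ∈ 𝒫, with sup_{P∈𝒫} E_P[|X|] < ∞ and sup_{P∈𝒫} E_P[|Y|] < ∞, and such that the difference X − Y is quasi-continuous. If X ≤ Y quasi-surely (i.e. v({X > Y}) = 0) and inf_{P∈𝒫} P({X < Y}) > 0, then sup_{P∈𝒫} E_P[X] < sup_{P∈𝒫} E_P[Y]. -/

import Mathlib

open MeasureTheory Set
open scoped NNReal BoundedContinuousFunction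

open Filter Topology in
private lemma strict_comparison_aux
    {Ω : Type*} [TopologicalSpace Ω] [PolishSpace Ω] [MeasurableSpace Ω] [BorelSpace Ω]
    (𝔓 : Set (ProbabilityMeasure Ω)) (h𝔓ne : 𝔓.Nonempty) (h𝔓cpt : IsCompact 𝔓)
    (X Y : Ω → ℝ) (hXmeas : Measurable X) (hYmeas : Measurable Y)
    (hXint : ∀ P ∈ 𝔓, Integrable X (P : Measure Ω))
    (hYint : ∀ P ∈ 𝔓, Integrable Y (P : Measure Ω))
    (hqc : ∀ ε : ℝ≥0, 0 < ε → ∃ O : Set Ω, IsOpen O ∧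
      (⨆ P : 𝔓, (P : ProbabilityMeasure Ω) O) < ε ∧
      ContinuousOn (fun ω => X ω - Y ω) Oᶜ)
    (hqs : (⨆ P : 𝔓, (P : ProbabilityMeasure Ω) {ω | Y ω < X ω}) = 0)
    (hinf : 0 < ⨅ P : 𝔓, (P : ProbabilityMeasure Ω) {ω | X ω < Y ω}) :
    0 < ⨅ P : 𝔓, ∫ ω, (Y ω - X ω) ∂((P : ProbabilityMeasure Ω) : Measure Ω) := by
  classical
  haveI : Nonempty ↥𝔓 := h𝔓ne.to_subtype
  set Z : Ω → ℝ := fun ω => Y ω - X ω with hZdef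
  have hZmeas : Measurable Z := hYmeas.sub hXmeas
  have hZint : ∀ P : 𝔓, Integrable Z ((P : ProbabilityMeasure Ω) : Measure Ω) :=
    fun P => (hYint P P.2).sub (hXint P P.2)
  -- a.e. nonnegativity of Z w.r.t. each P ∈ 𝔓
  have hae : ∀ P : 𝔓, ∀ᵐ ω ∂((P : ProbabilityMeasure Ω) : Measure Ω), 0 ≤ Z ω := by
    intro P
    have hb : BddAbove (Set.range fun P : 𝔓 =>
        (P : ProbabilityMeasure Ω) {ω | Y ω < X ω}) :=
      ⟨1, by rintro x ⟨Q, rfl⟩; exact ProbabilityMeasure.apply_le_one _ _⟩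
    have h1 : (P : ProbabilityMeasure Ω) {ω | Y ω < X ω} = 0 := by
      have := le_ciSup hb P
      rw [hqs] at this
      exact le_antisymm this zero_le
    have h2 : ((P : ProbabilityMeasure Ω) : Measure Ω) {ω | Y ω < X ω} = 0 := by
      rw [← ProbabilityMeasure.ennreal_coeFn_eq_coeFn_toMeasure, h1, ENNReal.coe_zero]
    rw [ae_iff]
    refine measure_mono_null ?_ h2
    intro ω hω
    simp only [mem_setOf_eq, not_le] at hω ⊢
    simpa [hZdef, sub_neg] using hω
  set φ : Ω → ℝ := fun ω => min (max (Z ω) 0) 1 with hφdef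
  have hφmeas : Measurable φ := (hZmeas.max measurable_const).min measurable_const
  have hφnonneg : ∀ ω, 0 ≤ φ ω := fun ω => le_min (le_max_right _ _) zero_le_one
  have hφle1 : ∀ ω, φ ω ≤ 1 := fun ω => min_le_right _ _
  have hφint : ∀ (μ : Measure Ω) [IsProbabilityMeasure μ], Integrable φ μ := by
    intro μ hμ
    refine (integrable_const (1 : ℝ)).mono' hφmeas.aestronglyMeasurable ?_
    filter_upwards with ω
    rw [Real.norm_eq_abs, abs_of_nonneg (hφnonneg ω)]
    exact hφle1 ω
  -- the infimum of ∫ Z is nonnegative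
  have hδ0 : 0 ≤ ⨅ P : 𝔓, ∫ ω, Z ω ∂((P : ProbabilityMeasure Ω) : Measure Ω) :=
    le_ciInf fun P => integral_nonneg_of_ae (hae P)
  by_contra hδpos
  have hδeq : (⨅ P : 𝔓, ∫ ω, Z ω ∂((P : ProbabilityMeasure Ω) : Measure Ω)) = 0 :=
    le_antisymm (not_lt.mp hδpos) hδ0
  -- a sequence nearly attaining the infimum
  have hseq : ∀ n : ℕ, ∃ P : 𝔓,
      ∫ ω, Z ω ∂((P : ProbabilityMeasure Ω) : Measure Ω) < 1 / (n + 1) := by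
    intro n
    refine exists_lt_of_ciInf_lt ?_
    rw [hδeq]
    positivity
  choose Pn hPn using hseq
  -- a cluster point Q ∈ 𝔓 of the sequence
  set F : Filter (ProbabilityMeasure Ω) :=
    Filter.map (fun n => ((Pn n : 𝔓) : ProbabilityMeasure Ω)) Filter.atTop with hFdef
  haveI : F.NeBot := Filter.map_neBot
  have hF : F ≤ Filter.principal 𝔓 := by
    rw [Filter.le_principal_iff, hFdef, Filter.mem_map]
    exact Filter.Eventually.of_forall fun n => (Pn n).2
  obtain ⟨Q, hQmem, hQcl⟩ := h𝔓cpt.exists_clusterPt hF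
  -- key estimate : ∫ φ dQ ≤ 5 ε for every ε > 0
  have hkey : ∀ ε : ℝ, 0 < ε →
      ∫ ω, φ ω ∂((Q : ProbabilityMeasure Ω) : Measure Ω) ≤ 5 * ε := by
    intro ε hε
    obtain ⟨O, hO, hOsup, hOcont⟩ := hqc ε.toNNReal (by simpa using hε)
    -- measure bound on O
    have hPO : ∀ P : 𝔓, (((P : ProbabilityMeasure Ω) : Measure Ω) O).toReal ≤ ε := by
      intro P
      have hb : BddAbove (Set.range fun P : 𝔓 => (P : ProbabilityMeasure Ω) O) :=
        ⟨1, by rintro x ⟨R, rfl⟩; exact ProbabilityMeasure.apply_le_one _ _⟩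
      have h1 : (P : ProbabilityMeasure Ω) O < ε.toNNReal :=
        lt_of_le_of_lt (le_ciSup hb P) hOsup
      have h2 : (((P : ProbabilityMeasure Ω) : Measure Ω) O).toReal
          = ((P : ProbabilityMeasure Ω) O : ℝ) := by
        rw [← ProbabilityMeasure.ennreal_coeFn_eq_coeFn_toMeasure, ENNReal.coe_toReal]
      rw [h2]
      calc ((P : ProbabilityMeasure Ω) O : ℝ) ≤ (ε.toNNReal : ℝ) := by
            exact_mod_cast h1.le
        _ = ε := by rw [Real.coe_toNNReal _ hε.le]
    -- continuity of φ on Oᶜ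
    have hZcont : ContinuousOn Z Oᶜ := by
      refine hOcont.neg.congr fun ω _ => ?_
      simp [hZdef, neg_sub]
    have hφcont : ContinuousOn φ Oᶜ :=
      (hZcont.sup continuousOn_const).inf continuousOn_const
    -- Tietze extension and clamping
    letI := TopologicalSpace.upgradeIsCompletelyMetrizable Ω
    obtain ⟨g, hg⟩ := ContinuousMap.exists_restrict_eq (Y := ℝ) hO.isClosed_compl
      ⟨Oᶜ.restrict φ, hφcont.restrict⟩
    set ψ : Ω → ℝ := fun ω => min (max (g ω) 0) 1 with hψdef
    have hψcont : Continuous ψ := (g.continuous.sup continuous_const).inf continuous_const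
    have hψnonneg : ∀ ω, 0 ≤ ψ ω := fun ω => le_min (le_max_right _ _) zero_le_one
    have hψle1 : ∀ ω, ψ ω ≤ 1 := fun ω => min_le_right _ _
    have hψeq : ∀ ω ∈ Oᶜ, ψ ω = φ ω := by
      intro ω hω
      have hgω : g ω = φ ω := by
        have := DFunLike.congr_fun hg (⟨ω, hω⟩ : ↥(Oᶜ))
        exact this
      rw [hψdef]
      simp only [hgω]
      rw [max_eq_left (hφnonneg ω), min_eq_left (hφle1 ω)]
    have hψint : ∀ (μ : Measure Ω) [IsProbabilityMeasure μ], Integrable ψ μ := by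
      intro μ hμ
      refine (integrable_const (1 : ℝ)).mono'
        hψcont.measurable.aestronglyMeasurable ?_
      filter_upwards with ω
      rw [Real.norm_eq_abs, abs_of_nonneg (hψnonneg ω)]
      exact hψle1 ω
    -- ψ and φ have close integrals
    have hdiff : ∀ (μ : Measure Ω) [IsProbabilityMeasure μ],
        |(∫ ω, ψ ω ∂μ) - ∫ ω, φ ω ∂μ| ≤ 2 * (μ O).toReal := by
      intro μ hμ
      have hind : Integrable (O.indicator fun _ => (2 : ℝ)) μ :=
        (integrable_const (2 : ℝ)).indicator hO.measurableSet
      rw [← integral_sub (hψint μ) (hφint μ)]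
      calc |∫ ω, (ψ ω - φ ω) ∂μ| ≤ ∫ ω, |ψ ω - φ ω| ∂μ := by
            simpa [Real.norm_eq_abs] using
              norm_integral_le_integral_norm (μ := μ) (fun ω => ψ ω - φ ω)
        _ ≤ ∫ ω, O.indicator (fun _ => (2 : ℝ)) ω ∂μ := by
            refine integral_mono ((hψint μ).sub (hφint μ)).abs hind ?_
            intro ω
            by_cases hω : ω ∈ O
            · rw [Set.indicator_of_mem hω]
              have h1 : |ψ ω - φ ω| ≤ |ψ ω| + |φ ω| := abs_sub _ _
              have h2 : |ψ ω| ≤ 1 := by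
                rw [abs_of_nonneg (hψnonneg ω)]; exact hψle1 ω
              have h3 : |φ ω| ≤ 1 := by
                rw [abs_of_nonneg (hφnonneg ω)]; exact hφle1 ω
              linarith
            · have h4 := hψeq ω hω
              simp [Set.indicator_of_notMem hω, h4]
        _ = 2 * (μ O).toReal := by
            rw [integral_indicator_const _ hO.measurableSet]; simp [mul_comm, Measure.real]
    -- bundle ψ as a bounded continuous function
    have hdist : ∀ x y : Ω, dist (ψ x) (ψ y) ≤ 1 := by
      intro x y
      have hx : ψ x ∈ Set.Icc (0 : ℝ) 1 := ⟨hψnonneg x, hψle1 x⟩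
      have hy : ψ y ∈ Set.Icc (0 : ℝ) 1 := ⟨hψnonneg y, hψle1 y⟩
      simpa using Real.dist_le_of_mem_Icc hx hy
    set ψb : Ω →ᵇ ℝ := BoundedContinuousFunction.mkOfBound ⟨ψ, hψcont⟩ 1 hdist with hψbdef
    have hψbcoe : ∀ ω, ψb ω = ψ ω := fun ω => rfl
    set G : ProbabilityMeasure Ω → ℝ :=
      fun R => ∫ ω, ψb ω ∂(R : Measure Ω) with hGdef
    have hGcont : Continuous G :=
      ProbabilityMeasure.continuous_integral_boundedContinuousFunction ψb
    -- upper bound along the sequence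
    have hupper : ∀ n : ℕ, G ((Pn n : 𝔓) : ProbabilityMeasure Ω)
        ≤ 1 / (n + 1) + 3 * ε := by
      intro n
      set μ : Measure Ω := (((Pn n : 𝔓) : ProbabilityMeasure Ω) : Measure Ω)
      have hφleZ : ∫ ω, φ ω ∂μ ≤ ∫ ω, Z ω ∂μ := by
        refine integral_mono_ae (hφint μ) (hZint (Pn n)) ?_
        filter_upwards [hae (Pn n)] with ω hω
        calc φ ω ≤ max (Z ω) 0 := min_le_left _ _
          _ = Z ω := max_eq_left hω
      have h1 : |(∫ ω, ψ ω ∂μ) - ∫ ω, φ ω ∂μ| ≤ 2 * (μ O).toReal := hdiff μ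
      have h2 : (μ O).toReal ≤ ε := hPO (Pn n)
      have h3 : ∫ ω, Z ω ∂μ < 1 / (n + 1) := hPn n
      have habs := abs_le.mp h1
      have hGn : G ((Pn n : 𝔓) : ProbabilityMeasure Ω) = ∫ ω, ψ ω ∂μ := rfl
      rw [hGn]
      linarith [habs.2]
    -- the value at the cluster point is small
    have hGQ : G Q ≤ 3 * ε := by
      by_contra hcon
      push_neg at hcon
      have hclG : ClusterPt (G Q) (Filter.map G F) :=
        hQcl.map hGcont.continuousAt Filter.tendsto_map
      have hmap : Filter.map G F
          = Filter.map (fun n => G ((Pn n : 𝔓) : ProbabilityMeasure Ω)) Filter.atTop := by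
        rw [hFdef, Filter.map_map]; rfl
      set η : ℝ := G Q - 3 * ε with hηdef
      have hηpos : 0 < η := by simp [hηdef]; linarith
      have hfreq : ∃ᶠ n in Filter.atTop,
          G ((Pn n : 𝔓) : ProbabilityMeasure Ω) ∈ Set.Ioi (3 * ε + η / 2) := by
        have hnb : Set.Ioi (3 * ε + η / 2) ∈ 𝓝 (G Q) := by
          refine Ioi_mem_nhds ?_
          simp [hηdef]; linarith
        have := clusterPt_iff_nonempty.mp hclG
        rw [Filter.frequently_iff]
        intro U hU
        obtain ⟨x, hx1, hx2⟩ := this hnb (by rw [hmap]; exact Filter.image_mem_map hU)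
        obtain ⟨n, hn, rfl⟩ := hx2
        exact ⟨n, hn, hx1⟩
      have hev : ∀ᶠ n in Filter.atTop,
          ¬ (G ((Pn n : 𝔓) : ProbabilityMeasure Ω) ∈ Set.Ioi (3 * ε + η / 2)) := by
        have hN : ∀ᶠ n : ℕ in Filter.atTop, (1 : ℝ) / (n + 1) < η / 2 :=
          tendsto_one_div_add_atTop_nhds_zero_nat.eventually_lt_const (by positivity)
        filter_upwards [hN] with n hn
        simp only [Set.mem_Ioi, not_lt]
        calc G ((Pn n : 𝔓) : ProbabilityMeasure Ω) ≤ 1 / (n + 1) + 3 * ε := hupper n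
          _ ≤ 3 * ε + η / 2 := by linarith
      obtain ⟨n, hn1, hn2⟩ := (hfreq.and_eventually hev).exists
      exact hn2 hn1
    -- conclude
    have hQdiff := hdiff ((Q : ProbabilityMeasure Ω) : Measure Ω)
    have hQO : ((Q : Measure Ω) O).toReal ≤ ε := hPO ⟨Q, hQmem⟩
    have habs := abs_le.mp hQdiff
    have hGQeq : G Q = ∫ ω, ψ ω ∂(Q : Measure Ω) := rfl
    rw [hGQeq] at hGQ
    linarith [habs.1]
  -- hence ∫ φ dQ = 0
  have hφQ0 : ∫ ω, φ ω ∂((Q : ProbabilityMeasure Ω) : Measure Ω) = 0 := by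
    have hle : ∫ ω, φ ω ∂((Q : ProbabilityMeasure Ω) : Measure Ω) ≤ 0 := by
      by_contra hc
      push_neg at hc
      have := hkey ((∫ ω, φ ω ∂((Q : ProbabilityMeasure Ω) : Measure Ω)) / 10) (by linarith)
      linarith
    exact le_antisymm hle (integral_nonneg hφnonneg)
  have hφae : φ =ᵐ[((Q : ProbabilityMeasure Ω) : Measure Ω)] 0 :=
    (integral_eq_zero_iff_of_nonneg hφnonneg
      (hφint ((Q : ProbabilityMeasure Ω) : Measure Ω))).mp hφQ0
  -- so {X < Y} is Q-null
  have hnull : ((Q : ProbabilityMeasure Ω) : Measure Ω) {ω | X ω < Y ω} = 0 := by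
    have h1 : ((Q : ProbabilityMeasure Ω) : Measure Ω) {ω | φ ω ≠ 0} = 0 := by
      have := hφae
      rw [Filter.EventuallyEq, ae_iff] at this
      simpa using this
    refine measure_mono_null ?_ h1
    intro ω hω
    simp only [mem_setOf_eq] at hω ⊢
    have hZω : 0 < Z ω := by simp [hZdef]; linarith
    have : 0 < φ ω := by
      rw [hφdef]
      simp only
      rw [max_eq_left hZω.le]
      exact lt_min hZω one_pos
    exact ne_of_gt this
  -- contradiction with hinf
  have hc : 0 < (Q : ProbabilityMeasure Ω) {ω | X ω < Y ω} :=
    lt_of_lt_of_le hinf (ciInf_le (OrderBot.bddBelow _) (⟨Q, hQmem⟩ : ↥𝔓))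
  have : (Q : ProbabilityMeasure Ω) {ω | X ω < Y ω} = 0 := by
    have := hnull
    rw [← ProbabilityMeasure.ennreal_coeFn_eq_coeFn_toMeasure] at this
    exact_mod_cast this
  rw [this] at hc
  exact lt_irrefl _ hc

/-- **Strict comparison theorem (Theorem 3.1).** Let `Ω` be a Polish space and `𝔓` a nonempty
weakly compact set of Borel probability measures on `Ω`.  Let `X, Y : Ω → ℝ` be Borel measurable,
integrable w.r.t. every `P ∈ 𝔓`, with `sup_{P ∈ 𝔓} E_P[|X|] < ∞` and
`sup_{P ∈ 𝔓} E_P[|Y|] < ∞`, and such that `X - Y` is quasi-continuous.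
If `X ≤ Y` quasi-surely (i.e. `v(X > Y) = 0`) and `inf_{P ∈ 𝔓} P(X < Y) > 0`, then
`sup_{P ∈ 𝔓} E_P[X] < sup_{P ∈ 𝔓} E_P[Y]`. -/
theorem strict_comparison
    {Ω : Type*} [TopologicalSpace Ω] [PolishSpace Ω] [MeasurableSpace Ω] [BorelSpace Ω]
    (𝔓 : Set (ProbabilityMeasure Ω)) (h𝔓ne : 𝔓.Nonempty) (h𝔓cpt : IsCompact 𝔓)
    (X Y : Ω → ℝ) (hXmeas : Measurable X) (hYmeas : Measurable Y)
    (hXint : ∀ P ∈ 𝔓, Integrable X (P : Measure Ω))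
    (hYint : ∀ P ∈ 𝔓, Integrable Y (P : Measure Ω))
    (hXbdd : BddAbove (Set.range fun P : 𝔓 => ∫ ω, |X ω| ∂((P : ProbabilityMeasure Ω) : Measure Ω)))
    (hYbdd : BddAbove (Set.range fun P : 𝔓 => ∫ ω, |Y ω| ∂((P : ProbabilityMeasure Ω) : Measure Ω)))
    (hqc : ∀ ε : ℝ≥0, 0 < ε → ∃ O : Set Ω, IsOpen O ∧
      (⨆ P : 𝔓, (P : ProbabilityMeasure Ω) O) < ε ∧
      ContinuousOn (fun ω => X ω - Y ω) Oᶜ)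
    (hqs : (⨆ P : 𝔓, (P : ProbabilityMeasure Ω) {ω | Y ω < X ω}) = 0)
    (hinf : 0 < ⨅ P : 𝔓, (P : ProbabilityMeasure Ω) {ω | X ω < Y ω}) :
    (⨆ P : 𝔓, ∫ ω, X ω ∂((P : ProbabilityMeasure Ω) : Measure Ω)) <
      ⨆ P : 𝔓, ∫ ω, Y ω ∂((P : ProbabilityMeasure Ω) : Measure Ω) := by
  classical
  haveI : Nonempty ↥𝔓 := h𝔓ne.to_subtype
  have hδpos := strict_comparison_aux 𝔓 h𝔓ne h𝔓cpt X Y hXmeas hYmeas hXint hYint hqc hqs hinf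
  set δ : ℝ := ⨅ P : 𝔓, ∫ ω, (Y ω - X ω) ∂((P : ProbabilityMeasure Ω) : Measure Ω) with hδdef
  have hYbdd' : BddAbove (Set.range fun P : 𝔓 =>
      ∫ ω, Y ω ∂((P : ProbabilityMeasure Ω) : Measure Ω)) := by
    obtain ⟨b, hb⟩ := hYbdd
    refine ⟨b, ?_⟩
    rintro x ⟨P, rfl⟩
    calc ∫ ω, Y ω ∂((P : ProbabilityMeasure Ω) : Measure Ω)
        ≤ ∫ ω, |Y ω| ∂((P : ProbabilityMeasure Ω) : Measure Ω) :=
          integral_mono (hYint P P.2) (hYint P P.2).abs fun ω => le_abs_self _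
      _ ≤ b := hb ⟨P, rfl⟩
  have hδle : ∀ P : 𝔓, δ ≤ ∫ ω, (Y ω - X ω) ∂((P : ProbabilityMeasure Ω) : Measure Ω) := by
    intro P
    refine ciInf_le ⟨0, ?_⟩ P
    rintro x ⟨R, rfl⟩
    have hb : BddAbove (Set.range fun P : 𝔓 =>
        (P : ProbabilityMeasure Ω) {ω | Y ω < X ω}) :=
      ⟨1, by rintro x ⟨S, rfl⟩; exact ProbabilityMeasure.apply_le_one _ _⟩
    have h1 : (R : ProbabilityMeasure Ω) {ω | Y ω < X ω} = 0 := by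
      have := le_ciSup hb R
      rw [hqs] at this
      exact le_antisymm this zero_le
    have h2 : ((R : ProbabilityMeasure Ω) : Measure Ω) {ω | Y ω < X ω} = 0 := by
      rw [← ProbabilityMeasure.ennreal_coeFn_eq_coeFn_toMeasure, h1, ENNReal.coe_zero]
    refine integral_nonneg_of_ae ?_
    have h3 : ∀ᵐ ω ∂((R : ProbabilityMeasure Ω) : Measure Ω), 0 ≤ Y ω - X ω := by
      rw [ae_iff]
      refine measure_mono_null ?_ h2
      intro ω hω
      simp only [mem_setOf_eq, not_le] at hω ⊢
      linarith
    exact h3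
  have hkey : ∀ P : 𝔓, ∫ ω, X ω ∂((P : ProbabilityMeasure Ω) : Measure Ω)
      ≤ (⨆ P : 𝔓, ∫ ω, Y ω ∂((P : ProbabilityMeasure Ω) : Measure Ω)) - δ := by
    intro P
    have h1 : ∫ ω, (Y ω - X ω) ∂((P : ProbabilityMeasure Ω) : Measure Ω)
        = (∫ ω, Y ω ∂((P : ProbabilityMeasure Ω) : Measure Ω))
          - ∫ ω, X ω ∂((P : ProbabilityMeasure Ω) : Measure Ω) :=
      integral_sub (hYint P P.2) (hXint P P.2)
    have h2 := hδle P
    have h3 : ∫ ω, Y ω ∂((P : ProbabilityMeasure Ω) : Measure Ω)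
        ≤ ⨆ P : 𝔓, ∫ ω, Y ω ∂((P : ProbabilityMeasure Ω) : Measure Ω) :=
      le_ciSup hYbdd' P
    rw [h1] at h2
    linarith
  have hfin : (⨆ P : 𝔓, ∫ ω, X ω ∂((P : ProbabilityMeasure Ω) : Measure Ω))
      ≤ (⨆ P : 𝔓, ∫ ω, Y ω ∂((P : ProbabilityMeasure Ω) : Measure Ω)) - δ :=
    ciSup_le hkey
  linarith
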